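/- For positive integers k, l and integer h with h ≥ max(k,l): if h is even then σ_{k,l}(h) = ⌈kl/2⌉ − σ_{k,l}(k+l−h−4), and if h is odd then σ_{k,l}(h) = ⌊kl/2⌋ − σ_{k,l}(k+l−h−4). -/
import Mathlib

/-- σ_{k,l}(h): number of points (u,v) with rows u ∈ [0,l), columns v ∈ [0,k),
reachable from (0,h): 0 ≤ u ≤ h−v and u ≡ h−v (mod 2). -/
def sigmaF (k l : ℕ) (h : ℤ) : ℕ :=
  ((Finset.range l ×ˢ Finset.range k).filter
    (fun p => (p.1 : ℤ) ≤ h - p.2 ∧ (p.1 : ℤ) % 2 = (h - p.2) % 2)).card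

lemma row_count (k : ℕ) (c : ℤ) :
    ((Finset.range k).filter (fun v : ℕ => (v : ℤ) % 2 = c % 2)).card
      = if c % 2 = 0 then (k + 1) / 2 else k / 2 := by
  induction k with
  | zero => simp
  | succ n ih =>
    rw [Finset.range_add_one, Finset.filter_insert]
    by_cases hc : (n : ℤ) % 2 = c % 2
    · rw [if_pos hc, Finset.card_insert_of_notMem (by simp), ih]
      split_ifs <;> omega
    · rw [if_neg hc, ih]
      split_ifs <;> omega

lemma col_sum (k l : ℕ) (h : ℤ) :
    (∑ u ∈ Finset.range l, if (h - u) % 2 = 0 then (k + 1) / 2 else k / 2)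
      = if h % 2 = 0 then (k * l + 1) / 2 else k * l / 2 := by
  induction l with
  | zero => simp
  | succ n ih =>
    rw [Finset.sum_range_succ, ih, Nat.mul_succ]
    have hm : k * n % 2 = k % 2 * (n % 2) % 2 := Nat.mul_mod k n 2
    set m := k * n with hmdef
    clear_value m
    rcases Nat.mod_two_eq_zero_or_one k with hk | hk <;>
      rcases Nat.mod_two_eq_zero_or_one n with hn | hn <;>
      rw [hk, hn] at hm <;> split_ifs <;> omega

lemma cardP (k l : ℕ) (h : ℤ) :
    ((Finset.range l ×ˢ Finset.range k).filter
        (fun p => ((p.1 : ℤ) + p.2) % 2 = h % 2)).card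
      = if h % 2 = 0 then (k * l + 1) / 2 else k * l / 2 := by
  rw [Finset.card_filter, Finset.sum_product, ← col_sum k l h]
  refine Finset.sum_congr rfl (fun u _ => ?_)
  have : (∑ v ∈ Finset.range k, if ((u : ℤ) + v) % 2 = h % 2 then 1 else 0)
      = ((Finset.range k).filter (fun v : ℕ => (v : ℤ) % 2 = (h - u) % 2)).card := by
    rw [Finset.card_filter]
    refine Finset.sum_congr rfl (fun v _ => ?_)
    congr 1
    exact propext ⟨fun hx => by omega, fun hx => by omega⟩
  rw [this, row_count]

lemma key (k l : ℕ) (h : ℤ) :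
    sigmaF k l h + sigmaF k l (k + l - h - 4)
      = ((Finset.range l ×ˢ Finset.range k).filter
        (fun p => ((p.1 : ℤ) + p.2) % 2 = h % 2)).card := by
  classical
  set P := (Finset.range l ×ˢ Finset.range k).filter
      (fun p => ((p.1 : ℤ) + p.2) % 2 = h % 2) with hP
  set S := (Finset.range l ×ˢ Finset.range k).filter
      (fun p => (p.1 : ℤ) ≤ h - p.2 ∧ (p.1 : ℤ) % 2 = (h - p.2) % 2) with hS
  have hsub : S ⊆ P := by
    intro p hp
    simp only [hS, hP, Finset.mem_filter] at *
    exact ⟨hp.1, by omega⟩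
  have hcard : P.card = S.card + (P \ S).card := by
    have := Finset.card_le_card hsub
    rw [Finset.card_sdiff_of_subset hsub]; omega
  have hbij : sigmaF k l (k + l - h - 4) = (P \ S).card := by
    apply Finset.card_bij (fun p _ => (l - 1 - p.1, k - 1 - p.2))
    · intro p hp
      simp only [sigmaF, Finset.mem_filter, Finset.mem_product, Finset.mem_range] at hp
      simp only [hP, hS, Finset.mem_sdiff, Finset.mem_filter, Finset.mem_product,
        Finset.mem_range]
      push_cast
      omega
    · intro p hp q hq hpq
      simp only [sigmaF, Finset.mem_filter, Finset.mem_product, Finset.mem_range] at hp hq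
      simp only [Prod.mk.injEq] at hpq
      have : p.1 = q.1 ∧ p.2 = q.2 := by omega
      exact Prod.ext this.1 this.2
    · intro p hp
      simp only [hP, hS, Finset.mem_sdiff, Finset.mem_filter, Finset.mem_product,
        Finset.mem_range] at hp
      refine ⟨(l - 1 - p.1, k - 1 - p.2), ?_, ?_⟩
      · simp only [sigmaF, Finset.mem_filter, Finset.mem_product, Finset.mem_range]
        push_cast
        omega
      · have h1 : p.1 < l := hp.1.1.1
        have h2 : p.2 < k := hp.1.1.2
        refine Prod.ext ?_ ?_ <;> simp <;> omega
  rw [sigmaF, ← hS, hbij, hcard]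

theorem stmt2 (k l : ℕ) (hk : 0 < k) (hl : 0 < l) (h : ℤ) (hh : (max k l : ℤ) ≤ h) :
    (Even h → (sigmaF k l h : ℤ) = ((k * l + 1) / 2 : ℕ) - sigmaF k l (k + l - h - 4)) ∧
    (¬ Even h → (sigmaF k l h : ℤ) = ((k * l) / 2 : ℕ) - sigmaF k l (k + l - h - 4)) := by
  have hkey := key k l h
  rw [cardP] at hkey
  constructor
  · intro he
    have h0 : h % 2 = 0 := Int.even_iff.mp he
    rw [if_pos h0] at hkey
    set m := (k * l + 1) / 2 with hm
    clear_value m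
    omega
  · intro he
    have h0 : ¬ h % 2 = 0 := fun hc => he (Int.even_iff.mpr hc)
    rw [if_neg h0] at hkey
    set m := k * l / 2 with hm
    clear_value m
    omega
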